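/- Let μ₁, …, μ_n and ν₁, …, ν_n be probability measures on a measurable space E, and let μ = μ₁ ⊗ ⋯ ⊗ μ_n and ν = ν₁ ⊗ ⋯ ⊗ ν_n be the corresponding product measures on E^n. Then ‖μ − ν‖_TV ≤ 1 − ∏_{i=1}^n (1 − ‖μ_i − ν_i‖_TV). -/

import Mathlib

open MeasureTheory ProbabilityTheory ENNReal Filter

noncomputable section

/-- Total variation distance between measures. -/
def tvDist {E : Type*} [MeasurableSpace E] (μ ν : Measure E) : ℝ :=
  ⨆ A : {s : Set E // MeasurableSet s}, |(μ A.1).toReal - (ν A.1).toReal|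

/-- Dobrushin contraction coefficient of a Markov kernel. -/
def dobrushin {E : Type*} [MeasurableSpace E] (M : Kernel E E) : ℝ :=
  ⨆ x, ⨆ y, tvDist (M x) (M y)

/-- Boltzmann–Gibbs update Ψ. -/
def BG {E : Type*} [MeasurableSpace E] (G : E → ℝ) (μ : Measure E) : Measure E :=
  (∫⁻ x, ENNReal.ofReal (G x) ∂μ)⁻¹ • μ.withDensity fun x => ENNReal.ofReal (G x)

/-- One-step map `Φ_j(μ) = Ψ_{j-1}(μ) M_j` (for `j ≥ 1`). -/
def Phi {E : Type*} [MeasurableSpace E] (G : ℕ → E → ℝ) (M : ℕ → Kernel E E)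
    (j : ℕ) (μ : Measure E) : Measure E :=
  (BG (G (j - 1)) μ).bind (M j)

/-- Iterated map `Φ_{0,n}`. -/
def PhiComp {E : Type*} [MeasurableSpace E] (G : ℕ → E → ℝ) (M : ℕ → Kernel E E) :
    ℕ → Measure E → Measure E
  | 0 => id
  | n + 1 => fun μ => Phi G M (n + 1) (PhiComp G M n μ)

/-- Empirical measure of `N` particles. -/
def empMeas {E : Type*} [MeasurableSpace E] {N : ℕ} (x : Fin N → E) : Measure E :=
  ((N : ℝ≥0∞))⁻¹ • ∑ i, Measure.dirac (x i)

/-- Reference-perturbed empirical measure (conditional particle filter). -/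
def cEmp {E : Type*} [MeasurableSpace E] {N : ℕ} (xstar : E) (x : Fin N → E) : Measure E :=
  ((N : ℝ≥0∞) + 1)⁻¹ • (Measure.dirac xstar + ∑ i, Measure.dirac (x i))

/-- Composition of kernels `𝐌_{n,n+k} = 𝐌_{n+k} ∘ ⋯ ∘ 𝐌_{n+1}`. -/
def kernelComp {α : Type*} [MeasurableSpace α] (K : ℕ → Kernel α α) (n : ℕ) :
    ℕ → Kernel α α
  | 0 => Kernel.id
  | k + 1 => (K (n + k + 1)).comp (kernelComp K n k)

/-- Perturbed Boltzmann–Gibbs update `Ψ̂`. -/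
def hatBG {E : Type*} [MeasurableSpace E] (G : E → ℝ) (xstar : E) (N : ℕ) (μ : Measure E) :
    Measure E :=
  BG G (((N : ℝ≥0∞) + 1)⁻¹ • Measure.dirac xstar + ((N : ℝ≥0∞) / ((N : ℝ≥0∞) + 1)) • μ)

/-- `L^p` norm of a real random variable. -/
def lpN {Ω : Type*} [MeasurableSpace Ω] (P : Measure Ω) (p : ℝ) (X : Ω → ℝ) : ℝ :=
  (∫ ω, |X ω| ^ p ∂P) ^ (1 / p)

/-- Oscillation of a real-valued function. -/
def osc {E : Type*} (f : E → ℝ) : ℝ := ⨆ x, ⨆ y, (f x - f y)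

/-- Squared Hellinger distance with respect to a dominating measure `lam`. -/
def hellingerSq {E : Type*} [MeasurableSpace E] (lam P Q : Measure E) : ℝ :=
  1 - (∫⁻ x, (P.rnDeriv lam x * Q.rnDeriv lam x) ^ (1 / 2 : ℝ) ∂lam).toReal

/-- `Qaux G m lam g k = Q_{k,k+g}`, defined through the densities `m` of the kernels. -/
def Qaux {E : Type*} [MeasurableSpace E] (G : ℕ → E → ℝ) (m : ℕ → E → E → ℝ)
    (lam : Measure E) : ℕ → ℕ → (E → ℝ) → E → ℝ
  | 0, _, φ => φ
  | g + 1, k, φ => fun x => G k x * ∫ y, m (k + 1) x y * Qaux G m lam g (k + 1) φ y ∂lam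

end


section AuxTV

open MeasureTheory Set

variable {E : Type*} [MeasurableSpace E]

private lemma tvDist_bdd (μ ν : Measure E) [IsProbabilityMeasure μ] [IsProbabilityMeasure ν] :
    BddAbove (Set.range fun A : {s : Set E // MeasurableSet s} =>
      |(μ A.1).toReal - (ν A.1).toReal|) := by
  refine ⟨2, ?_⟩
  rintro x ⟨A, rfl⟩
  have h1 : (μ A.1).toReal ≤ 1 := ENNReal.toReal_mono ENNReal.one_ne_top prob_le_one
  have h2 : (ν A.1).toReal ≤ 1 := ENNReal.toReal_mono ENNReal.one_ne_top prob_le_one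
  have h3 : 0 ≤ (μ A.1).toReal := ENNReal.toReal_nonneg
  have h4 : 0 ≤ (ν A.1).toReal := ENNReal.toReal_nonneg
  rw [abs_le]; constructor <;> linarith

private lemma le_tvDist (μ ν : Measure E) [IsProbabilityMeasure μ] [IsProbabilityMeasure ν]
    {A : Set E} (hA : MeasurableSet A) :
    (μ A).toReal - (ν A).toReal ≤ tvDist μ ν := by
  unfold tvDist
  exact (le_abs_self _).trans (le_ciSup (tvDist_bdd μ ν) ⟨A, hA⟩)

private lemma tvDist_le_one (μ ν : Measure E) [IsProbabilityMeasure μ] [IsProbabilityMeasure ν] :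
    tvDist μ ν ≤ 1 := by
  unfold tvDist
  refine ciSup_le fun A => ?_
  have h1 : (μ A.1).toReal ≤ 1 := ENNReal.toReal_mono ENNReal.one_ne_top prob_le_one
  have h2 : (ν A.1).toReal ≤ 1 := ENNReal.toReal_mono ENNReal.one_ne_top prob_le_one
  have h3 : 0 ≤ (μ A.1).toReal := ENNReal.toReal_nonneg
  have h4 : 0 ≤ (ν A.1).toReal := ENNReal.toReal_nonneg
  rw [abs_le]; constructor <;> linarith

private lemma pi_mono' {ι : Type*} [Fintype ι] {α : ι → Type*} [∀ i, MeasurableSpace (α i)]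
    (κ μ : ∀ i, Measure (α i)) (h : ∀ i, κ i ≤ μ i) :
    Measure.pi κ ≤ Measure.pi μ := by
  have hout : OuterMeasure.pi (fun i => (κ i).toOuterMeasure)
      ≤ OuterMeasure.pi (fun i => (μ i).toOuterMeasure) :=
    OuterMeasure.le_pi.2 fun s _ => (OuterMeasure.pi_pi_le _ s).trans
      (Finset.prod_le_prod' fun i _ => Measure.le_iff'.1 (h i) (s i))
  refine Measure.le_iff.2 fun s hs => ?_
  rw [Measure.pi_def, Measure.pi_def, toMeasure_apply _ _ hs, toMeasure_apply _ _ hs]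
  exact hout s

/-- existence of a common lower bound measure with large mass -/
private lemma exists_meet (μ ν : Measure E) [IsProbabilityMeasure μ] [IsProbabilityMeasure ν] :
    ∃ κ : Measure E, κ ≤ μ ∧ κ ≤ ν ∧ 1 - tvDist μ ν ≤ (κ univ).toReal := by
  obtain ⟨S, hS, h1, h2⟩ := hahn_decomposition (μ := μ) (ν := ν)
  refine ⟨ν.restrict S + μ.restrict Sᶜ, ?_, ?_, ?_⟩
  · refine Measure.le_iff.2 fun t ht => ?_
    rw [Measure.add_apply, Measure.restrict_apply ht, Measure.restrict_apply ht]
    calc ν (t ∩ S) + μ (t ∩ Sᶜ) ≤ μ (t ∩ S) + μ (t ∩ Sᶜ) := by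
          exact add_le_add (h1 _ (ht.inter hS) inter_subset_right) le_rfl
      _ = μ t := by rw [← Set.diff_eq, measure_inter_add_diff t hS]
  · refine Measure.le_iff.2 fun t ht => ?_
    rw [Measure.add_apply, Measure.restrict_apply ht, Measure.restrict_apply ht]
    calc ν (t ∩ S) + μ (t ∩ Sᶜ) ≤ ν (t ∩ S) + ν (t ∩ Sᶜ) := by
          exact add_le_add le_rfl (h2 _ (ht.inter hS.compl) inter_subset_right)
      _ = ν t := by rw [← Set.diff_eq, measure_inter_add_diff t hS]
  · rw [Measure.add_apply, Measure.restrict_apply_univ, Measure.restrict_apply_univ,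
      ENNReal.toReal_add (measure_ne_top _ _) (measure_ne_top _ _)]
    have hmc : (μ S).toReal + (μ Sᶜ).toReal = 1 := by
      rw [← ENNReal.toReal_add (measure_ne_top _ _) (measure_ne_top _ _),
        measure_add_measure_compl hS, measure_univ, ENNReal.toReal_one]
    have := le_tvDist μ ν hS
    linarith

end AuxTV


/-- Lemma `producttv`: total variation between product measures is at most
`1 - ∏ (1 - ‖μᵢ - νᵢ‖_TV)`. -/


theorem tv_product_bound {E : Type*} [MeasurableSpace E] (n : ℕ)
    (μ ν : Fin n → Measure E)
    [∀ i, IsProbabilityMeasure (μ i)] [∀ i, IsProbabilityMeasure (ν i)] :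
    tvDist (Measure.pi μ) (Measure.pi ν) ≤ 1 - ∏ i, (1 - tvDist (μ i) (ν i)) := by
  classical
  choose κ hκμ hκν hκu using fun i => exists_meet (μ i) (ν i)
  haveI : ∀ i, IsFiniteMeasure (κ i) := fun i =>
    ⟨(Measure.le_iff'.1 (hκμ i) _).trans_lt (measure_lt_top _ _)⟩
  have hKP : Measure.pi κ ≤ Measure.pi μ := pi_mono' _ _ hκμ
  have hKQ : Measure.pi κ ≤ Measure.pi ν := pi_mono' _ _ hκν
  have hKtop : ∀ s, Measure.pi κ s ≠ ⊤ := fun s =>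
    ((Measure.le_iff'.1 hKP s).trans_lt (measure_lt_top _ _)).ne
  set Ku := ((Measure.pi κ) Set.univ).toReal with hKudef
  have main : tvDist (Measure.pi μ) (Measure.pi ν) ≤ 1 - Ku := by
    unfold tvDist
    refine ciSup_le fun A => ?_
    obtain ⟨A, hA⟩ := A
    have h1 : (Measure.pi μ A).toReal + (Measure.pi μ Aᶜ).toReal = 1 := by
      rw [← ENNReal.toReal_add (measure_ne_top _ _) (measure_ne_top _ _),
        measure_add_measure_compl hA, measure_univ, ENNReal.toReal_one]
    have h2 : (Measure.pi ν A).toReal + (Measure.pi ν Aᶜ).toReal = 1 := by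
      rw [← ENNReal.toReal_add (measure_ne_top _ _) (measure_ne_top _ _),
        measure_add_measure_compl hA, measure_univ, ENNReal.toReal_one]
    have h3 : (Measure.pi κ A).toReal + (Measure.pi κ Aᶜ).toReal = Ku := by
      rw [← ENNReal.toReal_add (hKtop _) (hKtop _), measure_add_measure_compl hA]
    have h4 : (Measure.pi κ A).toReal ≤ (Measure.pi μ A).toReal :=
      ENNReal.toReal_mono (measure_ne_top _ _) (Measure.le_iff'.1 hKP A)
    have h5 : (Measure.pi κ Aᶜ).toReal ≤ (Measure.pi μ Aᶜ).toReal :=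
      ENNReal.toReal_mono (measure_ne_top _ _) (Measure.le_iff'.1 hKP Aᶜ)
    have h6 : (Measure.pi κ A).toReal ≤ (Measure.pi ν A).toReal :=
      ENNReal.toReal_mono (measure_ne_top _ _) (Measure.le_iff'.1 hKQ A)
    have h7 : (Measure.pi κ Aᶜ).toReal ≤ (Measure.pi ν Aᶜ).toReal :=
      ENNReal.toReal_mono (measure_ne_top _ _) (Measure.le_iff'.1 hKQ Aᶜ)
    rw [abs_le]; constructor <;> linarith
  have prodle : ∏ i, (1 - tvDist (μ i) (ν i)) ≤ Ku := by
    have hKuprod : Ku = ∏ i, (κ i Set.univ).toReal := by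
      rw [hKudef, Measure.pi_univ, ENNReal.toReal_prod]
    rw [hKuprod]
    refine Finset.prod_le_prod (fun i _ => ?_) (fun i _ => hκu i)
    have := tvDist_le_one (μ i) (ν i)
    linarith
  linarith
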